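/- (Sequence kernel of Theorem 1) Let θ > 0, let {δ_k}_{k≥1} and {η_k}_{k≥1} be nonnegative real sequences with Σ_{k=1}^∞ η_k < +∞ and δ_{k+1} ≤ δ_k − θδ_k² + (3/2)η_k for all k ≥ 1. Then Σ_{k=1}^∞ δ_k² < +∞ and δ_k → 0 as k → ∞. -/

import Mathlib

open Filter

/-- **Sequence kernel of Theorem 1.**
Let `θ > 0` and let `{δ_k}` and `{η_k}` be nonnegative sequences with
`Σ_{k=1}^∞ η_k < ∞` and `δ_{k+1} ≤ δ_k − θδ_k² + (3/2)η_k` for all `k ≥ 1`.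
Then `Σ_{k=1}^∞ δ_k² < ∞` and `δ_k → 0`. -/
theorem seq_kernel_global_convergence
    (θ : ℝ) (hθ : 0 < θ)
    (δ η : ℕ → ℝ)
    (hδ : ∀ k, 1 ≤ k → 0 ≤ δ k)
    (hη : ∀ k, 1 ≤ k → 0 ≤ η k)
    (hsum : Summable fun k : ℕ => η (k + 1))
    (hrec : ∀ k, 1 ≤ k → δ (k + 1) ≤ δ k - θ * δ k ^ 2 + 3 / 2 * η k) :
    (Summable fun k : ℕ => δ (k + 1) ^ 2)
      ∧ Tendsto δ atTop (nhds 0) := by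
  have hηnn : ∀ i : ℕ, 0 ≤ η (i + 1) := fun i => hη _ (Nat.le_add_left 1 i)
  have hbound : ∀ n : ℕ, ∑ i ∈ Finset.range n, θ * δ (i + 1) ^ 2
      ≤ δ 1 + 3 / 2 * ∑' k : ℕ, η (k + 1) := by
    intro n
    have h1 : ∑ i ∈ Finset.range n, θ * δ (i + 1) ^ 2
        ≤ ∑ i ∈ Finset.range n, ((δ (i + 1) - δ (i + 2)) + 3 / 2 * η (i + 1)) := by
      apply Finset.sum_le_sum
      intro i _
      have := hrec (i + 1) (Nat.le_add_left 1 i)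
      linarith
    have h2 : ∑ i ∈ Finset.range n, (δ (i + 1) - δ (i + 2))
        = δ 1 - δ (n + 1) := by
      clear h1
      induction n with
      | zero => simp
      | succ m ih => rw [Finset.sum_range_succ, ih]; ring
    have h3 : ∑ i ∈ Finset.range n, η (i + 1) ≤ ∑' k : ℕ, η (k + 1) :=
      Summable.sum_le_tsum _ (fun i _ => hηnn i) hsum
    have h4 : 0 ≤ δ (n + 1) := hδ _ (Nat.le_add_left 1 n)
    calc ∑ i ∈ Finset.range n, θ * δ (i + 1) ^ 2
        ≤ ∑ i ∈ Finset.range n, ((δ (i + 1) - δ (i + 2)) + 3 / 2 * η (i + 1)) := h1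
      _ = (δ 1 - δ (n + 1)) + 3 / 2 * ∑ i ∈ Finset.range n, η (i + 1) := by
          rw [Finset.sum_add_distrib, h2, Finset.mul_sum]
      _ ≤ δ 1 + 3 / 2 * ∑' k : ℕ, η (k + 1) := by nlinarith
  have hsθ : Summable fun i : ℕ => θ * δ (i + 1) ^ 2 := by
    apply summable_of_sum_range_le (fun i => by positivity) hbound
  have hs : Summable fun k : ℕ => δ (k + 1) ^ 2 := by
    have := hsθ.mul_left θ⁻¹
    simpa [← mul_assoc, inv_mul_cancel₀ hθ.ne'] using this
  refine ⟨hs, ?_⟩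
  have hsq : Tendsto (fun k : ℕ => δ (k + 1) ^ 2) atTop (nhds 0) :=
    hs.tendsto_atTop_zero
  have hd1 : Tendsto (fun k : ℕ => δ (k + 1)) atTop (nhds 0) := by
    have : Tendsto (fun k : ℕ => Real.sqrt (δ (k + 1) ^ 2)) atTop (nhds 0) := by
      have := (Real.continuous_sqrt.tendsto 0).comp hsq
      simpa [Function.comp_def] using this
    refine this.congr fun k => ?_
    exact Real.sqrt_sq (hδ _ (Nat.le_add_left 1 k))
  exact (tendsto_add_atTop_iff_nat 1).mp hd1
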